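/- Let (λ_n)_{n∈ℕ}, (μ_n)_{n∈ℕ} ∈ Λ, let d ∈ ℕ, let D ⊆ ℝ^d be a nonempty convex set, and let f : D → ℝ be bounded from below. If the inequality f(∑_{i=1}^∞ λ_i x_i) ≤ ∑_{i=1}^∞ μ_i f(x_i) holds for every bounded sequence (x_i)_{i∈ℕ} in D (where the right-hand side is understood as an element of (−∞, ∞]), then f is convex. -/

import Mathlib

set_option maxHeartbeats 1000000
open Filter Topology
open Filter Topology


private lemma sandwich (lam : ℕ → ℝ) (hpos : ∀ n, 0 < lam n) (hanti : Antitone lam)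
    (χ : ℕ → ℝ) (hχ : ∀ i, χ i = 0 ∨ χ i = 1) (hsummχ : Summable fun i => lam i * χ i)
    (v : ℝ) (hv0 : 0 ≤ v) (hvS : v ≤ ∑' i, lam i * χ i) :
    ∃ χ₁ χ₂ : ℕ → ℝ, (∀ i, χ₁ i = 0 ∨ χ₁ i = 1) ∧ (∀ i, χ₂ i = 0 ∨ χ₂ i = 1) ∧
      (∀ i, χ₁ i ≤ χ i) ∧ (∀ i, χ₂ i ≤ χ i) ∧
      Summable (fun i => lam i * χ₁ i) ∧ Summable (fun i => lam i * χ₂ i) ∧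
      (∑' i, lam i * χ₁ i) ≤ v ∧ v ≤ (∑' i, lam i * χ₂ i) ∧
      (∑' i, lam i * χ₂ i) - (∑' i, lam i * χ₁ i) ≤ lam 0 := by
  classical
  by_cases hall : ∀ n, (∑ i ∈ Finset.range n, lam i * χ i) ≤ v
  · refine ⟨χ, χ, hχ, hχ, fun i => le_refl _, fun i => le_refl _, hsummχ, hsummχ, ?_, hvS, ?_⟩
    · exact le_of_tendsto' hsummχ.hasSum.tendsto_sum_nat hall
    · simpa using (hpos 0).le
  · push_neg at hall
    have hNex : ∃ n, v < ∑ i ∈ Finset.range n, lam i * χ i := hall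
    set N := Nat.find hNex with hN
    have hNspec : v < ∑ i ∈ Finset.range N, lam i * χ i := Nat.find_spec hNex
    have hN0 : N ≠ 0 := by
      intro h
      rw [h] at hNspec
      simp at hNspec
      linarith
    obtain ⟨m, hm⟩ := Nat.exists_eq_succ_of_ne_zero hN0
    have hmlt : ∑ i ∈ Finset.range m, lam i * χ i ≤ v := by
      by_contra hcon
      push_neg at hcon
      have := Nat.find_min hNex (m := m) (by omega)
      exact this hcon
    refine ⟨fun i => if i < m then χ i else 0, fun i => if i < m + 1 then χ i else 0,
      ?_, ?_, ?_, ?_, ?_, ?_, ?_, ?_, ?_⟩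
    · intro i; by_cases h : i < m <;> simp [h, hχ i]
    · intro i; by_cases h : i < m + 1 <;> simp [h, hχ i]
    · intro i; by_cases h : i < m <;> simp [h]
      rcases hχ i with h' | h' <;> simp [h']
    · intro i; by_cases h : i < m + 1 <;> simp [h]
      rcases hχ i with h' | h' <;> simp [h']
    · apply hsummχ.of_nonneg_of_le
      · intro i; by_cases h : i < m <;>
          simp [h, mul_nonneg (hpos i).le] <;>
          rcases hχ i with h' | h' <;> simp [h', (hpos i).le]
      · intro i; by_cases h : i < m <;> simp [h]
        rcases hχ i with h' | h' <;> simp [h', mul_nonneg (hpos i).le]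
        · rcases hχ i with h' | h' <;> simp [h', (hpos i).le]
    · apply hsummχ.of_nonneg_of_le
      · intro i; by_cases h : i < m + 1 <;>
          simp [h, mul_nonneg (hpos i).le] <;>
          rcases hχ i with h' | h' <;> simp [h', (hpos i).le]
      · intro i; by_cases h : i < m + 1 <;> simp [h]
        rcases hχ i with h' | h' <;> simp [h', mul_nonneg (hpos i).le]
        · rcases hχ i with h' | h' <;> simp [h', (hpos i).le]
    · have : (∑' i, lam i * (if i < m then χ i else 0)) = ∑ i ∈ Finset.range m, lam i * χ i := by
        rw [tsum_eq_sum (s := Finset.range m) (by intro b hb; simp at hb; simp [Nat.not_lt.2 hb, hb])]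
        · apply Finset.sum_congr rfl
          intro i hi; simp at hi; simp [hi]
      rw [this]; exact hmlt
    · have : (∑' i, lam i * (if i < m + 1 then χ i else 0)) = ∑ i ∈ Finset.range (m+1), lam i * χ i := by
        rw [tsum_eq_sum (s := Finset.range (m+1)) (by intro b hb; simp at hb; simp [Nat.not_lt.2 hb, hb])]
        · apply Finset.sum_congr rfl
          intro i hi; simp at hi; simp [hi]
      rw [this]
      rw [hm] at hNspec
      exact hNspec.le
    · have h1 : (∑' i, lam i * (if i < m then χ i else 0)) = ∑ i ∈ Finset.range m, lam i * χ i := by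
        rw [tsum_eq_sum (s := Finset.range m) (by intro b hb; simp at hb; simp [Nat.not_lt.2 hb, hb])]
        · apply Finset.sum_congr rfl
          intro i hi; simp at hi; simp [hi]
      have h2 : (∑' i, lam i * (if i < m + 1 then χ i else 0)) = ∑ i ∈ Finset.range (m+1), lam i * χ i := by
        rw [tsum_eq_sum (s := Finset.range (m+1)) (by intro b hb; simp at hb; simp [Nat.not_lt.2 hb, hb])]
        · apply Finset.sum_congr rfl
          intro i hi; simp at hi; simp [hi]
      rw [h1, h2, Finset.sum_range_succ]
      have : lam m * χ m ≤ lam 0 := by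
        rcases hχ m with h' | h' <;> simp [h']
        · exact (hpos 0).le
        · exact hanti (Nat.zero_le m)
      linarith


private lemma aux_main (lam mu : ℕ → ℝ)
    (hlam_pos : ∀ n, 0 < lam n) (hlam_anti : Antitone lam) (hlam_sum : HasSum lam 1)
    (hmu_pos : ∀ n, 0 < mu n) (hmu_sum : HasSum mu 1)
    (d : ℕ) (D : Set (EuclideanSpace ℝ (Fin d))) (hD : Convex ℝ D)
    (f : EuclideanSpace ℝ (Fin d) → ℝ) (B : ℝ) (hB : ∀ x ∈ D, B ≤ f x)
    (hineq : ∀ x : ℕ → EuclideanSpace ℝ (Fin d), (∀ i, x i ∈ D) →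
      (∃ K, ∀ i, ‖x i‖ ≤ K) →
      Summable (fun i => mu i * f (x i)) →
      f (∑' i, lam i • x i) ≤ ∑' i, mu i * f (x i))
    (x y : EuclideanSpace ℝ (Fin d)) (hx : x ∈ D) (hy : y ∈ D) (hfyx : f y ≤ f x)
    (t : ℝ) (ht0 : 0 < t) (ht1 : t < 1) :
    f (t • x + (1 - t) • y) ≤ f y + (f x - f y) * t := by
  classical
  set φ : ℝ → ℝ := fun s => f (s • x + (1 - s) • y) with hφ
  set c : ℝ := f x - f y with hc
  have hc0 : 0 ≤ c := by simp [hc]; linarith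
  have hφ0 : φ 0 = f y := by simp [hφ]
  have hφ1 : φ 1 = f x := by simp [hφ]
  have hmem : ∀ s : ℝ, 0 ≤ s → s ≤ 1 → s • x + (1 - s) • y ∈ D := by
    intro s h0 h1
    exact hD hx hy h0 (by linarith) (by ring)
  have hφB : ∀ s : ℝ, 0 ≤ s → s ≤ 1 → B ≤ φ s := fun s h0 h1 => hB _ (hmem s h0 h1)
  -- MIX
  have MIX : ∀ (dg : ℕ → ℝ) (T C : ℝ), (∀ i, 0 ≤ dg i) → (∀ i, dg i ≤ 1) →
      (∀ i, φ (dg i) ≤ C) → HasSum (fun i => lam i * dg i) T →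
      Summable (fun i => mu i * φ (dg i)) ∧ φ T ≤ ∑' i, mu i * φ (dg i) := by
    intro dg T C h0 h1 hC hT
    set X : ℕ → EuclideanSpace ℝ (Fin d) := fun i => dg i • x + (1 - dg i) • y with hX
    have hXD : ∀ i, X i ∈ D := fun i => hmem _ (h0 i) (h1 i)
    have hXf : ∀ i, f (X i) = φ (dg i) := fun i => rfl
    have hbdd : ∃ K, ∀ i, ‖X i‖ ≤ K := by
      refine ⟨‖x‖ + ‖y‖, fun i => ?_⟩
      calc ‖X i‖ ≤ ‖dg i • x‖ + ‖(1 - dg i) • y‖ := norm_add_le _ _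
        _ ≤ ‖x‖ + ‖y‖ := by
            rw [norm_smul, norm_smul, Real.norm_eq_abs, Real.norm_eq_abs]
            have h2 : |dg i| ≤ 1 := by rw [abs_le]; constructor <;> linarith [h0 i, h1 i]
            have h3 : |1 - dg i| ≤ 1 := by rw [abs_le]; constructor <;> linarith [h0 i, h1 i]
            have e1 := mul_le_mul_of_nonneg_right h2 (norm_nonneg x)
            have e2 := mul_le_mul_of_nonneg_right h3 (norm_nonneg y)
            simp only [one_mul] at e1 e2
            linarith
    have habs : ∀ i, |f (X i)| ≤ max |B| |C| := by
      intro i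
      rw [abs_le]
      constructor
      · have := hφB (dg i) (h0 i) (h1 i)
        calc -(max |B| |C|) ≤ -|B| := by simp [neg_le_neg_iff]
          _ ≤ B := neg_abs_le B
          _ ≤ f (X i) := hB _ (hXD i)
      · calc f (X i) ≤ C := hC i
          _ ≤ |C| := le_abs_self C
          _ ≤ max |B| |C| := le_max_right _ _
    have hsummf : Summable fun i => mu i * f (X i) := by
      apply Summable.of_abs
      have hb : Summable fun i => mu i * max |B| |C| := hmu_sum.summable.mul_right _
      apply Summable.of_nonneg_of_le (fun i => abs_nonneg _) (fun i => ?_) hb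
      rw [abs_mul, abs_of_pos (hmu_pos i)]
      exact mul_le_mul_of_nonneg_left (habs i) (hmu_pos i).le
    have hT0 : 0 ≤ T := hasSum_le (fun i => mul_nonneg (hlam_pos i).le (h0 i)) hasSum_zero hT
    have hT1 : T ≤ 1 := hasSum_le (fun i => by
      have := mul_le_mul_of_nonneg_left (h1 i) (hlam_pos i).le
      simpa using this) hT hlam_sum
    have hXsum : HasSum (fun i => lam i • X i) (T • x + (1 - T) • y) := by
      have h1' : HasSum (fun i => (lam i * dg i) • x) (T • x) := hT.smul_const x
      have h2' : HasSum (fun i => (lam i * (1 - dg i)) • y) ((1 - T) • y) := by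
        have : HasSum (fun i => lam i * (1 - dg i)) (1 - T) := by
          have := hlam_sum.sub hT
          convert this using 2 with i
          exacts [rfl, by ring]
        exact this.smul_const y
      have := h1'.add h2'
      convert this using 2 with i
      simp [hX, smul_add, smul_smul]
    have := hineq X hXD hbdd hsummf
    rw [hXsum.tsum_eq] at this
    exact ⟨hsummf, this⟩
  -- good points
  set Dg : ℝ → ℝ → Prop := fun ε s => (0 ≤ s ∧ s ≤ 1) ∧ φ s ≤ φ 0 + c * s + ε with hDg
  have hsummlamχ : ∀ χ : ℕ → ℝ, (∀ i, χ i = 0 ∨ χ i = 1) → Summable (fun i => lam i * χ i) := by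
    intro χ hχ
    apply hlam_sum.summable.of_nonneg_of_le (fun i => ?_) (fun i => ?_)
    · rcases hχ i with h | h <;> simp [h, (hlam_pos i).le]
    · rcases hχ i with h | h <;> simp [h, (hlam_pos i).le]
  have hsummmuχ : ∀ χ : ℕ → ℝ, (∀ i, χ i = 0 ∨ χ i = 1) → Summable (fun i => mu i * χ i) := by
    intro χ hχ
    apply hmu_sum.summable.of_nonneg_of_le (fun i => ?_) (fun i => ?_)
    · rcases hχ i with h | h <;> simp [h, (hmu_pos i).le]
    · rcases hχ i with h | h <;> simp [h, (hmu_pos i).le]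
  have hMu01 : ∀ χ : ℕ → ℝ, (∀ i, χ i = 0 ∨ χ i = 1) →
      0 ≤ (∑' i, mu i * χ i) ∧ (∑' i, mu i * χ i) ≤ 1 := by
    intro χ hχ
    constructor
    · apply tsum_nonneg
      intro i; rcases hχ i with h | h <;> simp [h, (hmu_pos i).le]
    · rw [← hmu_sum.tsum_eq]
      apply Summable.tsum_le_tsum (fun i => ?_) (hsummmuχ χ hχ) hmu_sum.summable
      rcases hχ i with h | h <;> simp [h, (hmu_pos i).le]
  have hLam01 : ∀ χ : ℕ → ℝ, (∀ i, χ i = 0 ∨ χ i = 1) →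
      0 ≤ (∑' i, lam i * χ i) ∧ (∑' i, lam i * χ i) ≤ 1 := by
    intro χ hχ
    constructor
    · apply tsum_nonneg
      intro i; rcases hχ i with h | h <;> simp [h, (hlam_pos i).le]
    · rw [← hlam_sum.tsum_eq]
      apply Summable.tsum_le_tsum (fun i => ?_) (hsummlamχ χ hχ) hlam_sum.summable
      rcases hχ i with h | h <;> simp [h, (hlam_pos i).le]
  -- K4 : mixing of two good points, with high digit on a set where mu ≤ lam
  have K4 : ∀ ε a b, 0 < ε → Dg ε a → Dg ε b → a ≤ b → ∀ χ : ℕ → ℝ,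
      (∀ i, χ i = 0 ∨ χ i = 1) → (∀ i, χ i = 1 → mu i ≤ lam i) →
      Dg ε (a + (b - a) * ∑' i, lam i * χ i) := by
    intro ε a b hε ha hb hab χ hχ hside
    obtain ⟨⟨ha0, ha1⟩, haφ⟩ := ha
    obtain ⟨⟨hb0, hb1⟩, hbφ⟩ := hb
    set Lχ := ∑' i, lam i * χ i with hLχ
    set Mχ := ∑' i, mu i * χ i with hMχ
    obtain ⟨hL0, hL1⟩ := hLam01 χ hχ
    obtain ⟨hM0, hM1⟩ := hMu01 χ hχ
    have hML : Mχ ≤ Lχ := by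
      apply Summable.tsum_le_tsum (fun i => ?_) (hsummmuχ χ hχ) (hsummlamχ χ hχ)
      rcases hχ i with h | h <;> simp [h]
      exact hside i h
    set dg : ℕ → ℝ := fun i => a + (b - a) * χ i with hdg
    have hdg0 : ∀ i, 0 ≤ dg i := by
      intro i; rcases hχ i with h | h <;> simp [hdg, h] <;> linarith
    have hdg1 : ∀ i, dg i ≤ 1 := by
      intro i; rcases hχ i with h | h <;> simp [hdg, h] <;> linarith
    have hφdg : ∀ i, φ (dg i) = φ a + (φ b - φ a) * χ i := by
      intro i; rcases hχ i with h | h <;> simp [hdg, h]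
    have hCbd : ∀ i, φ (dg i) ≤ max (φ a) (φ b) := by
      intro i; rw [hφdg i]; rcases hχ i with h | h <;> simp [h]
    have hTsum : HasSum (fun i => lam i * dg i) (a + (b - a) * Lχ) := by
      have h1' : HasSum (fun i => lam i * a) (1 * a) := hlam_sum.mul_right a
      have h2' : HasSum (fun i => (b - a) * (lam i * χ i)) ((b - a) * Lχ) :=
        (hsummlamχ χ hχ).hasSum.mul_left _
      have := h1'.add h2'
      simp only [one_mul] at this
      convert this using 2 with i
      simp [hdg]; ring
    obtain ⟨hsumm, hmix⟩ := MIX dg (a + (b - a) * Lχ) (max (φ a) (φ b)) hdg0 hdg1 hCbd hTsum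
    have hRHS : HasSum (fun i => mu i * φ (dg i)) (φ a + (φ b - φ a) * Mχ) := by
      have h1' : HasSum (fun i => mu i * φ a) (1 * φ a) := hmu_sum.mul_right _
      have h2' : HasSum (fun i => (φ b - φ a) * (mu i * χ i)) ((φ b - φ a) * Mχ) :=
        (hsummmuχ χ hχ).hasSum.mul_left _
      have := h1'.add h2'
      simp only [one_mul] at this
      convert this using 2 with i
      rw [hφdg i]; ring
    rw [hRHS.tsum_eq] at hmix
    constructor
    · constructor <;> nlinarith
    · calc φ (a + (b - a) * Lχ) ≤ φ a + (φ b - φ a) * Mχ := hmix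
        _ = (1 - Mχ) * φ a + Mχ * φ b := by ring
        _ ≤ (1 - Mχ) * (φ 0 + c * a + ε) + Mχ * (φ 0 + c * b + ε) := by
            apply add_le_add
            · exact mul_le_mul_of_nonneg_left haφ (by linarith)
            · exact mul_le_mul_of_nonneg_left hbφ hM0
        _ = φ 0 + c * (a + (b - a) * Mχ) + ε := by ring
        _ ≤ φ 0 + c * (a + (b - a) * Lχ) + ε := by
            nlinarith [mul_le_mul_of_nonneg_left hML (mul_nonneg hc0 (sub_nonneg.2 hab))]
  -- K4' : mixing with low digit on a set where lam ≤ mu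
  have K4' : ∀ ε a b, 0 < ε → Dg ε a → Dg ε b → a ≤ b → ∀ χ : ℕ → ℝ,
      (∀ i, χ i = 0 ∨ χ i = 1) → (∀ i, χ i = 1 → lam i ≤ mu i) →
      Dg ε (b - (b - a) * ∑' i, lam i * χ i) := by
    intro ε a b hε ha hb hab χ hχ hside
    obtain ⟨⟨ha0, ha1⟩, haφ⟩ := ha
    obtain ⟨⟨hb0, hb1⟩, hbφ⟩ := hb
    set Lχ := ∑' i, lam i * χ i with hLχ
    set Mχ := ∑' i, mu i * χ i with hMχ
    obtain ⟨hL0, hL1⟩ := hLam01 χ hχ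
    obtain ⟨hM0, hM1⟩ := hMu01 χ hχ
    have hML : Lχ ≤ Mχ := by
      apply Summable.tsum_le_tsum (fun i => ?_) (hsummlamχ χ hχ) (hsummmuχ χ hχ)
      rcases hχ i with h | h <;> simp [h]
      exact hside i h
    set dg : ℕ → ℝ := fun i => b - (b - a) * χ i with hdg
    have hdg0 : ∀ i, 0 ≤ dg i := by
      intro i; rcases hχ i with h | h <;> simp [hdg, h] <;> linarith
    have hdg1 : ∀ i, dg i ≤ 1 := by
      intro i; rcases hχ i with h | h <;> simp [hdg, h] <;> linarith
    have hφdg : ∀ i, φ (dg i) = φ b + (φ a - φ b) * χ i := by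
      intro i; rcases hχ i with h | h <;> simp [hdg, h]
    have hCbd : ∀ i, φ (dg i) ≤ max (φ a) (φ b) := by
      intro i; rw [hφdg i]; rcases hχ i with h | h <;> simp [h]
    have hTsum : HasSum (fun i => lam i * dg i) (b - (b - a) * Lχ) := by
      have h1' : HasSum (fun i => lam i * b) (1 * b) := hlam_sum.mul_right b
      have h2' : HasSum (fun i => (b - a) * (lam i * χ i)) ((b - a) * Lχ) :=
        (hsummlamχ χ hχ).hasSum.mul_left _
      have := h1'.sub h2'
      simp only [one_mul] at this
      convert this using 2 with i
      exacts [rfl, by simp [hdg]; ring]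
    obtain ⟨hsumm, hmix⟩ := MIX dg (b - (b - a) * Lχ) (max (φ a) (φ b)) hdg0 hdg1 hCbd hTsum
    have hRHS : HasSum (fun i => mu i * φ (dg i)) (φ b + (φ a - φ b) * Mχ) := by
      have h1' : HasSum (fun i => mu i * φ b) (1 * φ b) := hmu_sum.mul_right _
      have h2' : HasSum (fun i => (φ a - φ b) * (mu i * χ i)) ((φ a - φ b) * Mχ) :=
        (hsummmuχ χ hχ).hasSum.mul_left _
      have := h1'.add h2'
      simp only [one_mul] at this
      convert this using 2 with i
      rw [hφdg i]; ring
    rw [hRHS.tsum_eq] at hmix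
    constructor
    · constructor <;> nlinarith
    · calc φ (b - (b - a) * Lχ) ≤ φ b + (φ a - φ b) * Mχ := hmix
        _ = (1 - Mχ) * φ b + Mχ * φ a := by ring
        _ ≤ (1 - Mχ) * (φ 0 + c * b + ε) + Mχ * (φ 0 + c * a + ε) := by
            apply add_le_add
            · exact mul_le_mul_of_nonneg_left hbφ (by linarith)
            · exact mul_le_mul_of_nonneg_left haφ hM0
        _ = φ 0 + c * (b - (b - a) * Mχ) + ε := by ring
        _ ≤ φ 0 + c * (b - (b - a) * Lχ) + ε := by
            nlinarith [mul_le_mul_of_nonneg_left hML (mul_nonneg hc0 (sub_nonneg.2 hab))]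
  -- lam 0 < 1
  have hlam0lt1 : lam 0 < 1 := by
    have h2 : (0:ℝ) < ∑' i, lam (i + 1) := by
      have hs : Summable fun i => lam (i + 1) := (summable_nat_add_iff 1).2 hlam_sum.summable
      have := Summable.le_tsum hs 0 (fun i _ => (hlam_pos _).le)
      have := hlam_pos 1
      simp at *
      linarith
    have := Summable.tsum_eq_zero_add hlam_sum.summable
    rw [hlam_sum.tsum_eq] at this
    linarith
  have hlam00 : 0 ≤ lam 0 := (hlam_pos 0).le
  -- p and q indicator functions
  set p : ℕ → ℝ := fun i => if mu i ≤ lam i then 1 else 0 with hp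
  set q : ℕ → ℝ := fun i => if lam i ≤ mu i then 1 else 0 with hq
  have hp01 : ∀ i, p i = 0 ∨ p i = 1 := by
    intro i; by_cases h : mu i ≤ lam i <;> simp [hp, h]
  have hq01 : ∀ i, q i = 0 ∨ q i = 1 := by
    intro i; by_cases h : lam i ≤ mu i <;> simp [hq, h]
  have hpside : ∀ i, p i = 1 → mu i ≤ lam i := by
    intro i h; by_contra hcon; simp [hp, hcon] at h
  have hqside : ∀ i, q i = 1 → lam i ≤ mu i := by
    intro i h; by_contra hcon; simp [hq, hcon] at h
  have hcov : 1 ≤ (∑' i, lam i * p i) + (∑' i, lam i * q i) := by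
    have hsump := hsummlamχ p hp01
    have hsumq := hsummlamχ q hq01
    have := Summable.tsum_le_tsum (f := lam) (g := fun i => lam i * p i + lam i * q i)
      (fun i => ?_) hlam_sum.summable (hsump.add hsumq)
    · rw [hlam_sum.tsum_eq] at this
      rwa [Summable.tsum_add hsump hsumq] at this
    · show lam i ≤ lam i * p i + lam i * q i
      rcases le_total (mu i) (lam i) with h | h
      · have : p i = 1 := by simp [hp, h]
        rw [this]
        have h0q : 0 ≤ lam i * q i := by
          rcases hq01 i with h' | h' <;> simp [h', (hlam_pos i).le]
        linarith
      · have : q i = 1 := by simp [hq, h]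
        rw [this]
        have h0p : 0 ≤ lam i * p i := by
          rcases hp01 i with h' | h' <;> simp [h', (hlam_pos i).le]
        linarith
  -- density of good points
  have DENS : ∀ ε, 0 < ε → ∀ k : ℕ, ∀ w : ℝ, 0 ≤ w → w ≤ 1 →
      ∃ a b : ℝ, Dg ε a ∧ Dg ε b ∧ a ≤ w ∧ w ≤ b ∧ b - a ≤ (lam 0) ^ k := by
    intro ε hε k
    induction k with
    | zero =>
      intro w hw0 hw1
      refine ⟨0, 1, ?_, ?_, hw0, hw1, by norm_num⟩
      · exact ⟨⟨le_refl 0, zero_le_one⟩, by simp; linarith⟩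
      · refine ⟨⟨zero_le_one, le_refl 1⟩, ?_⟩
        rw [hφ1, hφ0]
        simp [hc]
        linarith
    | succ k ih =>
      intro w hw0 hw1
      obtain ⟨a, b, hga, hgb, haw, hwb, hgap⟩ := ih w hw0 hw1
      have hab : a ≤ b := le_trans haw hwb
      by_cases hba : b - a ≤ 0
      · exact ⟨a, b, hga, hgb, haw, hwb, by
          have : (0:ℝ) ≤ lam 0 ^ (k+1) := pow_nonneg hlam00 _
          linarith⟩
      push_neg at hba
      set wb : ℝ := (w - a) / (b - a) with hwbdef
      have hwb0 : 0 ≤ wb := div_nonneg (by linarith) (by linarith)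
      have hwb1 : wb ≤ 1 := by
        rw [div_le_one hba]; linarith
      have hwback : a + (b - a) * wb = w := by
        rw [hwbdef]; field_simp; ring
      by_cases hcase : wb ≤ ∑' i, lam i * p i
      · obtain ⟨χ₁, χ₂, h1a, h2a, h1le, h2le, hs1, hs2, hz1, hz2, hzgap⟩ :=
          sandwich lam hlam_pos hlam_anti p hp01 (hsummlamχ p hp01) wb hwb0 hcase
        have hside1 : ∀ i, χ₁ i = 1 → mu i ≤ lam i := by
          intro i h
          apply hpside i
          rcases hp01 i with h' | h'
          · exfalso; have := h1le i; rw [h, h'] at this; linarith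
          · exact h'
        have hside2 : ∀ i, χ₂ i = 1 → mu i ≤ lam i := by
          intro i h
          apply hpside i
          rcases hp01 i with h' | h'
          · exfalso; have := h2le i; rw [h, h'] at this; linarith
          · exact h'
        refine ⟨a + (b - a) * ∑' i, lam i * χ₁ i, a + (b - a) * ∑' i, lam i * χ₂ i,
          K4 ε a b hε hga hgb hab χ₁ h1a hside1, K4 ε a b hε hga hgb hab χ₂ h2a hside2,
          ?_, ?_, ?_⟩
        · rw [← hwback]
          have := mul_le_mul_of_nonneg_left hz1 (le_of_lt hba)
          linarith
        · rw [← hwback]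
          have := mul_le_mul_of_nonneg_left hz2 (le_of_lt hba)
          linarith
        · have heq : (a + (b - a) * ∑' i, lam i * χ₂ i) - (a + (b - a) * ∑' i, lam i * χ₁ i)
              = (b - a) * ((∑' i, lam i * χ₂ i) - ∑' i, lam i * χ₁ i) := by ring
          rw [heq, pow_succ]
          apply mul_le_mul (by linarith) hzgap (by linarith) (pow_nonneg hlam00 _)
      · push_neg at hcase
        have hcase2 : 1 - wb ≤ ∑' i, lam i * q i := by linarith
        obtain ⟨χ₁, χ₂, h1a, h2a, h1le, h2le, hs1, hs2, hz1, hz2, hzgap⟩ :=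
          sandwich lam hlam_pos hlam_anti q hq01 (hsummlamχ q hq01) (1 - wb) (by linarith) hcase2
        have hside1 : ∀ i, χ₁ i = 1 → lam i ≤ mu i := by
          intro i h
          apply hqside i
          rcases hq01 i with h' | h'
          · exfalso; have := h1le i; rw [h, h'] at this; linarith
          · exact h'
        have hside2 : ∀ i, χ₂ i = 1 → lam i ≤ mu i := by
          intro i h
          apply hqside i
          rcases hq01 i with h' | h'
          · exfalso; have := h2le i; rw [h, h'] at this; linarith
          · exact h'
        refine ⟨b - (b - a) * ∑' i, lam i * χ₂ i, b - (b - a) * ∑' i, lam i * χ₁ i,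
          K4' ε a b hε hga hgb hab χ₂ h2a hside2, K4' ε a b hε hga hgb hab χ₁ h1a hside1,
          ?_, ?_, ?_⟩
        · rw [← hwback]
          have := mul_le_mul_of_nonneg_left hz2 (le_of_lt hba)
          nlinarith
        · rw [← hwback]
          have := mul_le_mul_of_nonneg_left hz1 (le_of_lt hba)
          nlinarith
        · have heq : (b - (b - a) * ∑' i, lam i * χ₁ i) - (b - (b - a) * ∑' i, lam i * χ₂ i)
              = (b - a) * ((∑' i, lam i * χ₂ i) - ∑' i, lam i * χ₁ i) := by ring
          rw [heq, pow_succ]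
          apply mul_le_mul (by linarith) hzgap (by linarith) (pow_nonneg hlam00 _)
  -- tail sums
  set Tl : ℕ → ℝ := fun n => ∑' i, lam (i + n) with hTl
  have hTlsumm : ∀ n, Summable fun i => lam (i + n) :=
    fun n => (summable_nat_add_iff n).2 hlam_sum.summable
  have hTl0 : Tl 0 = 1 := by
    rw [hTl]
    simp only [Nat.add_zero]
    exact hlam_sum.tsum_eq
  have hTlpos : ∀ n, 0 < Tl n := by
    intro n
    have h := Summable.le_tsum (hTlsumm n) 0 (fun i _ => (hlam_pos _).le)
    simp only [Nat.zero_add] at h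
    exact lt_of_lt_of_le (hlam_pos n) h
  have hTlrec : ∀ n, Tl n = lam n + Tl (n + 1) := by
    intro n
    have h := Summable.tsum_eq_zero_add (hTlsumm n)
    simp only [Nat.zero_add] at h
    rw [hTl]
    simp only []
    rw [h]
    congr 1
    apply tsum_congr
    intro i
    congr 1
    omega
  have hTltend : Tendsto Tl atTop (nhds 0) := tendsto_sum_nat_add lam
  -- KEY estimate
  have KEY : ∀ ε δ : ℝ, 0 < ε → 0 < δ → δ ≤ t → δ ≤ 1 - t →
      φ t ≤ φ 0 + c * (t + δ) + ε := by
    intro ε δ hε hδ hδt hδ1t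
    have hwin : ∀ n r, (t - δ) * Tl n < r → r < (t + δ) * Tl n →
        ∃ s, Dg ε s ∧ (t - δ < s ∧ s < t + δ ∧
          (t - δ) * Tl (n+1) < r - lam n * s ∧ r - lam n * s < (t + δ) * Tl (n+1)) := by
      intro n r hlo hhi
      have hTn := hTlpos n
      have hTn1 := hTlpos (n+1)
      have hln := hlam_pos n
      have hrec := hTlrec n
      set sstar := r / Tl n with hsstar
      have hs1 : t - δ < sstar := by rw [hsstar, lt_div_iff₀ hTn]; linarith
      have hs2 : sstar < t + δ := by rw [hsstar, div_lt_iff₀ hTn]; linarith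
      set lo := (r - (t + δ) * Tl (n+1)) / lam n with hlodef
      have hlammul : lam n * lo = r - (t + δ) * Tl (n+1) := by
        rw [hlodef]; field_simp
      have hlamsstar : lam n * sstar = r - r * Tl (n+1) / Tl n := by
        have hlam_eq : lam n = Tl n - Tl (n+1) := by linarith
        rw [hsstar, hlam_eq]
        field_simp
      have hfrac : r * Tl (n+1) / Tl n < (t + δ) * Tl (n+1) := by
        rw [div_lt_iff₀ hTn]
        nlinarith
      have hfrac2 : (t - δ) * Tl (n+1) < r * Tl (n+1) / Tl n := by
        rw [lt_div_iff₀ hTn]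
        nlinarith
      have hlosstar : lo < sstar := by
        have : lam n * lo < lam n * sstar := by rw [hlammul, hlamsstar]; linarith
        exact lt_of_mul_lt_mul_left this hln.le
      set ρ := min (sstar - lo) (sstar - (t - δ)) with hρ
      have hρpos : 0 < ρ := lt_min (by linarith) (by linarith)
      obtain ⟨k, hk⟩ := exists_pow_lt_of_lt_one hρpos hlam0lt1
      have hsstar0 : 0 ≤ sstar := by linarith
      have hsstar1 : sstar ≤ 1 := by linarith
      obtain ⟨a, b, hga, hgb, has, hsb, hba⟩ := DENS ε hε k sstar hsstar0 hsstar1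
      have hcl : sstar - a ≤ lam 0 ^ k := by linarith
      have halo : lo < a := by
        have h1 : ρ ≤ sstar - lo := min_le_left _ _
        linarith [lt_of_le_of_lt hcl hk]
      have hatd : t - δ < a := by
        have h1 : ρ ≤ sstar - (t - δ) := min_le_right _ _
        linarith [lt_of_le_of_lt hcl hk]
      refine ⟨a, hga, hatd, by linarith, ?_, ?_⟩
      · have : lam n * a ≤ lam n * sstar := mul_le_mul_of_nonneg_left has hln.le
        rw [hlamsstar] at this
        linarith
      · have : lam n * lo < lam n * a := by
          exact (mul_lt_mul_iff_right₀ hln).2 halo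
        rw [hlammul] at this
        linarith
    classical
    set GoodP : ℕ → ℝ → ℝ → Prop := fun n r s => Dg ε s ∧ (t - δ < s ∧ s < t + δ ∧
      (t - δ) * Tl (n+1) < r - lam n * s ∧ r - lam n * s < (t + δ) * Tl (n+1)) with hGoodP
    set pick : ℕ → ℝ → ℝ := fun n r => if h : ∃ s, GoodP n r s then h.choose else t with hpick
    set r : ℕ → ℝ := fun n => Nat.rec t (fun m rm => rm - lam m * pick m rm) n with hrdef
    have hr0 : r 0 = t := rfl
    have hrs : ∀ n, r (n+1) = r n - lam n * pick n (r n) := fun n => rfl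
    have hInv : ∀ n, (t - δ) * Tl n < r n ∧ r n < (t + δ) * Tl n := by
      intro n
      induction n with
      | zero => rw [hr0, hTl0]; constructor <;> nlinarith
      | succ n ihn =>
        obtain ⟨h1, h2⟩ := ihn
        have hex : ∃ s, GoodP n (r n) s := hwin n (r n) h1 h2
        have hps : GoodP n (r n) (pick n (r n)) := by
          rw [hpick]; simp only [dif_pos hex]; exact hex.choose_spec
        rw [hrs n]
        exact ⟨hps.2.2.2.1, hps.2.2.2.2⟩
    have hGoodAll : ∀ n, GoodP n (r n) (pick n (r n)) := by
      intro n
      obtain ⟨h1, h2⟩ := hInv n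
      have hex : ∃ s, GoodP n (r n) s := hwin n (r n) h1 h2
      rw [hpick]; simp only [dif_pos hex]; exact hex.choose_spec
    set dg : ℕ → ℝ := fun n => pick n (r n) with hdgdef
    have hdgD : ∀ n, Dg ε (dg n) := fun n => (hGoodAll n).1
    have hdglo : ∀ n, t - δ < dg n := fun n => (hGoodAll n).2.1
    have hdghi : ∀ n, dg n < t + δ := fun n => (hGoodAll n).2.2.1
    have hdg0 : ∀ n, 0 ≤ dg n := fun n => le_of_lt (lt_of_le_of_lt (by linarith) (hdglo n))
    have hdg1 : ∀ n, dg n ≤ 1 := fun n => le_of_lt (lt_of_lt_of_le (hdghi n) (by linarith))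
    have hpart : ∀ n, ∑ i ∈ Finset.range n, lam i * dg i = t - r n := by
      intro n
      induction n with
      | zero => simp [hr0]
      | succ n ihn =>
        rw [Finset.sum_range_succ, ihn, hrs n]
        simp [hdgdef]
        ring
    have hrtend : Tendsto r atTop (nhds 0) := by
      have hlow : Tendsto (fun n => (t - δ) * Tl n) atTop (nhds 0) := by
        have := hTltend.const_mul (t - δ)
        simpa using this
      have hhigh : Tendsto (fun n => (t + δ) * Tl n) atTop (nhds 0) := by
        have := hTltend.const_mul (t + δ)
        simpa using this
      exact tendsto_of_tendsto_of_tendsto_of_le_of_le hlow hhigh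
        (fun n => (hInv n).1.le) (fun n => (hInv n).2.le)
    have hsummdg : Summable fun i => lam i * dg i := by
      apply hlam_sum.summable.of_nonneg_of_le
      · intro i; exact mul_nonneg (hlam_pos i).le (hdg0 i)
      · intro i
        have := mul_le_mul_of_nonneg_left (hdg1 i) (hlam_pos i).le
        simpa using this
    have hsumt : HasSum (fun i => lam i * dg i) t := by
      have h1 : Tendsto (fun n => ∑ i ∈ Finset.range n, lam i * dg i) atTop (nhds t) := by
        have : (fun n => ∑ i ∈ Finset.range n, lam i * dg i) = fun n => t - r n :=
          funext hpart
        rw [this]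
        have := tendsto_const_nhds (x := t) (f := atTop (α := ℕ)).sub hrtend
        simpa using this
      have h2 := hsummdg.hasSum.tendsto_sum_nat
      have := tendsto_nhds_unique h2 h1
      rw [← this]
      exact hsummdg.hasSum
    have hCbd : ∀ i, φ (dg i) ≤ φ 0 + c + ε := by
      intro i
      have h1 := (hdgD i).2
      have h2 : c * dg i ≤ c := by
        have := mul_le_mul_of_nonneg_left (hdg1 i) hc0
        simpa using this
      linarith
    obtain ⟨hsummφ, hmixφ⟩ := MIX dg t (φ 0 + c + ε) hdg0 hdg1 hCbd hsumt
    have hsummudg : Summable fun i => mu i * dg i := by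
      apply hmu_sum.summable.of_nonneg_of_le
      · intro i; exact mul_nonneg (hmu_pos i).le (hdg0 i)
      · intro i
        have := mul_le_mul_of_nonneg_left (hdg1 i) (hmu_pos i).le
        simpa using this
    set Smu := ∑' i, mu i * dg i with hSmu
    have hSmult : Smu ≤ t + δ := by
      rw [hSmu]
      have h2 : HasSum (fun i => mu i * (t + δ)) (t + δ) := by
        have := hmu_sum.mul_right (t + δ)
        simpa using this
      rw [← h2.tsum_eq]
      apply Summable.tsum_le_tsum (fun i => ?_) hsummudg h2.summable
      exact mul_le_mul_of_nonneg_left (hdghi i).le (hmu_pos i).le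
    have hRHSsum : HasSum (fun i => mu i * (φ 0 + c * dg i + ε)) ((φ 0 + ε) + c * Smu) := by
      have h1 : HasSum (fun i => mu i * (φ 0 + ε)) (1 * (φ 0 + ε)) := hmu_sum.mul_right _
      have h2 : HasSum (fun i => c * (mu i * dg i)) (c * Smu) := hsummudg.hasSum.mul_left c
      have := h1.add h2
      simp only [one_mul] at this
      convert this using 2 with i
      ring
    have hstep : (∑' i, mu i * φ (dg i)) ≤ (φ 0 + ε) + c * Smu := by
      rw [← hRHSsum.tsum_eq]
      apply Summable.tsum_le_tsum (fun i => ?_) hsummφ hRHSsum.summable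
      exact mul_le_mul_of_nonneg_left (hdgD i).2 (hmu_pos i).le
    have hfinal : c * Smu ≤ c * (t + δ) := mul_le_mul_of_nonneg_left hSmult hc0
    calc φ t ≤ ∑' i, mu i * φ (dg i) := hmixφ
      _ ≤ (φ 0 + ε) + c * Smu := hstep
      _ ≤ φ 0 + c * (t + δ) + ε := by linarith
  -- conclusion
  have main : φ t ≤ φ 0 + c * t := by
    apply le_of_forall_pos_le_add
    intro η hη
    set δ := min (η / (2 * (c + 1))) (min t (1 - t)) with hδdef
    have hc1 : (0:ℝ) < c + 1 := by linarith
    have hδpos : 0 < δ := by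
      apply lt_min
      · positivity
      · exact lt_min ht0 (by linarith)
    have hδt : δ ≤ t := le_trans (min_le_right _ _) (min_le_left _ _)
    have hδt1 : δ ≤ 1 - t := le_trans (min_le_right _ _) (min_le_right _ _)
    have hkey := KEY (η / 2) δ (by linarith) hδpos hδt hδt1
    have hcδ : c * δ ≤ η / 2 := by
      have hδle : δ ≤ η / (2 * (c + 1)) := min_le_left _ _
      have h1 : c * δ ≤ c * (η / (2 * (c + 1))) := mul_le_mul_of_nonneg_left hδle hc0
      have h2 : η / (2 * (c + 1)) * (2 * (c + 1)) = η := div_mul_cancel₀ _ (by positivity)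
      nlinarith [hδpos, hδle]
    have hexp : c * (t + δ) = c * t + c * δ := by ring
    rw [hexp] at hkey
    calc φ t ≤ φ 0 + (c * t + c * δ) + η / 2 := hkey
      _ ≤ φ 0 + c * t + (η / 2 + η / 2) := by linarith
      _ = φ 0 + c * t + η := by ring
  calc f (t • x + (1 - t) • y) = φ t := rfl
    _ ≤ φ 0 + c * t := main
    _ = f y + (f x - f y) * t := by rw [hφ0, hc]


/-- Main theorem: let `(λ_n), (μ_n) ∈ Λ`, `D ⊆ ℝ^d` nonempty convex, and `f : D → ℝ`
bounded from below.  If `f(∑ λ_i x_i) ≤ ∑ μ_i f(x_i)` holds for every bounded sequence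
`(x_i)` in `D` (the right-hand side being an element of `(−∞,∞]`, i.e. the inequality is
only a restriction when the series converges), then `f` is convex. -/
theorem stmt_8 (lam mu : ℕ → ℝ)
    (hlam_pos : ∀ n, 0 < lam n) (hlam_anti : Antitone lam) (hlam_sum : HasSum lam 1)
    (hmu_pos : ∀ n, 0 < mu n) (hmu_anti : Antitone mu) (hmu_sum : HasSum mu 1)
    (d : ℕ) (D : Set (EuclideanSpace ℝ (Fin d))) (hne : D.Nonempty) (hD : Convex ℝ D)
    (f : EuclideanSpace ℝ (Fin d) → ℝ) (B : ℝ) (hB : ∀ x ∈ D, B ≤ f x)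
    (hineq : ∀ x : ℕ → EuclideanSpace ℝ (Fin d), (∀ i, x i ∈ D) →
      (∃ K, ∀ i, ‖x i‖ ≤ K) →
      Summable (fun i => mu i * f (x i)) →
      f (∑' i, lam i • x i) ≤ ∑' i, mu i * f (x i)) :
    ConvexOn ℝ D f := by
  refine ⟨hD, ?_⟩
  intro x hx y hy a b ha hb hab
  rcases eq_or_lt_of_le ha with ha0 | ha0
  · have hb1 : b = 1 := by linarith
    rw [← ha0, hb1]
    simp
  rcases eq_or_lt_of_le hb with hb0 | hb0
  · have ha1 : a = 1 := by linarith
    rw [← hb0, ha1]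
    simp
  have ha1 : a < 1 := by linarith
  have hb_eq : b = 1 - a := by linarith
  rcases le_total (f y) (f x) with hc | hc
  · have h := aux_main lam mu hlam_pos hlam_anti hlam_sum hmu_pos hmu_sum d D hD f B hB
      hineq x y hx hy hc a ha0 ha1
    rw [hb_eq]
    calc f (a • x + (1 - a) • y) ≤ f y + (f x - f y) * a := h
      _ = a * f x + (1 - a) * f y := by ring
  · have hb1 : b < 1 := by linarith
    have h := aux_main lam mu hlam_pos hlam_anti hlam_sum hmu_pos hmu_sum d D hD f B hB
      hineq y x hy hx hc b hb0 hb1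
    have hxy : a • x + b • y = b • y + (1 - b) • x := by
      rw [add_comm]
      congr 1
      rw [show (1:ℝ) - b = a by linarith]
    rw [hxy]
    calc f (b • y + (1 - b) • x) ≤ f x + (f y - f x) * b := h
      _ = a * f x + b * f y := by rw [show a = 1 - b by linarith]; ring
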